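/- For all n ≥ 1, j ≥ 1 and r ≥ 0, p^r_j(n) = Σ_{k=0}^{∞} Σ_{s=0}^{k} C(k,s) (−1)^s p^{r+k−s}_{j−1}(n), where the outer sum converges. -/

import Mathlib

open Finset Filter Function fwdDiff


/-- `p r j n` : the number of restricted barred preferential arrangements of an `n`-set with
`r` restricted sections and `j` free sections, given by the convergent series
`p^r_j(n) = \sum_{s=0}^\infty C(j+s-1, s) (r+s)^n / 2^(j+s)`
(the coefficient of `m^n/n!` in `e^{rm}/(2-e^m)^j`). -/
noncomputable def p (r j n : ℕ) : ℝ :=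
  ∑' s : ℕ, ((j + s - 1).choose s : ℝ) * ((r + s : ℕ) : ℝ) ^ n / 2 ^ (j + s)

lemma sum_poly_geo (C : ℝ) (d : ℕ) :
    Summable (fun s : ℕ => ((s : ℝ) + C) ^ d * (1 / 2 : ℝ) ^ s) := by
  have h : Summable (fun s : ℕ =>
      ∑ i ∈ range (d + 1), (C ^ (d - i) * (d.choose i : ℝ)) * ((s : ℝ) ^ i * (1 / 2 : ℝ) ^ s)) := by
    apply summable_sum
    intro i _
    exact (summable_pow_mul_geometric_of_norm_lt_one i
      (by rw [Real.norm_eq_abs, abs_lt]; constructor <;> norm_num : ‖(1 / 2 : ℝ)‖ < 1)).mul_left _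
  apply h.congr
  intro s
  rw [add_pow, Finset.sum_mul]
  exact Finset.sum_congr rfl fun i _ => by ring

lemma poly_geo_tendsto (C : ℝ) (d : ℕ) :
    Tendsto (fun s : ℕ => ((s : ℝ) + C) ^ d * (1 / 2 : ℝ) ^ s) atTop (nhds 0) :=
  (sum_poly_geo C d).tendsto_atTop_zero

lemma p_summable (r j n : ℕ) :
    Summable (fun s : ℕ => ((j + s - 1).choose s : ℝ) * ((r + s : ℕ) : ℝ) ^ n / 2 ^ (j + s)) := by
  have hb : Summable (fun s : ℕ =>
      (((j : ℝ) + 1) ^ j * ((r : ℝ) + 1) ^ n) * (((s : ℝ) + 1) ^ (j + n) * (1 / 2 : ℝ) ^ s)) :=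
    (sum_poly_geo 1 (j + n)).mul_left _
  apply Summable.of_nonneg_of_le (fun s => by positivity) _ hb
  intro s
  have hch : ((j + s - 1).choose s : ℝ) ≤ ((j : ℝ) + s) ^ j := by
    have h1 : (j + s - 1).choose s ≤ (j + s) ^ j := by
      calc (j + s - 1).choose s ≤ (j + s).choose s := Nat.choose_le_choose s (Nat.sub_le _ _)
        _ = (j + s).choose j := Nat.choose_symm_add.symm
        _ ≤ (j + s) ^ j := Nat.choose_le_pow _ _
    calc ((j + s - 1).choose s : ℝ) ≤ (((j + s) ^ j : ℕ) : ℝ) := by exact_mod_cast h1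
      _ = ((j : ℝ) + s) ^ j := by push_cast; ring
  have h2 : ((j : ℝ) + s) ^ j ≤ (((j : ℝ) + 1) * ((s : ℝ) + 1)) ^ j := by
    apply pow_le_pow_left₀ (by positivity)
    nlinarith [Nat.cast_nonneg (α := ℝ) j, Nat.cast_nonneg (α := ℝ) s]
  have h3 : ((r + s : ℕ) : ℝ) ^ n ≤ (((r : ℝ) + 1) * ((s : ℝ) + 1)) ^ n := by
    apply pow_le_pow_left₀ (by positivity)
    push_cast
    nlinarith [Nat.cast_nonneg (α := ℝ) r, Nat.cast_nonneg (α := ℝ) s]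
  have h4 : (1 : ℝ) / 2 ^ (j + s) ≤ (1 / 2 : ℝ) ^ s := by
    rw [div_pow, one_pow]
    apply one_div_le_one_div_of_le (by positivity)
    apply pow_le_pow_right₀ (by norm_num)
    omega
  calc ((j + s - 1).choose s : ℝ) * ((r + s : ℕ) : ℝ) ^ n / 2 ^ (j + s)
      = ((j + s - 1).choose s : ℝ) * ((r + s : ℕ) : ℝ) ^ n * (1 / 2 ^ (j + s)) := by ring
    _ ≤ (((j : ℝ) + 1) * ((s : ℝ) + 1)) ^ j * ((((r : ℝ) + 1) * ((s : ℝ) + 1)) ^ n) * ((1 / 2 : ℝ) ^ s) := by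
        apply mul_le_mul _ h4 (by positivity) (by positivity)
        apply mul_le_mul (hch.trans h2) h3 (by positivity) (by positivity)
    _ = (((j : ℝ) + 1) ^ j * ((r : ℝ) + 1) ^ n) * (((s : ℝ) + 1) ^ (j + n) * (1 / 2 : ℝ) ^ s) := by
        rw [mul_pow, mul_pow, pow_add]; ring

lemma hockey (J u : ℕ) : ∑ t ∈ range (u + 1), (J + t - 1).choose t = (J + u).choose u := by
  induction u with
  | zero => simp
  | succ u ih =>
    rw [Finset.sum_range_succ, ih, show J + (u + 1) - 1 = J + u by omega,
      show J + (u + 1) = (J + u) + 1 by omega, Nat.choose_succ_succ]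
set_option maxHeartbeats 1000000 in
lemma pA (r j n : ℕ) (hj : 1 ≤ j) :
    p r j n = ∑' m : ℕ, (1 / 2 : ℝ) ^ (m + 1) * p (r + m) (j - 1) n := by
  classical
  set F : ℕ × ℕ → ℝ := fun mt =>
    (1 / 2 : ℝ) ^ (mt.1 + 1) * (((j - 1 + mt.2 - 1).choose mt.2 : ℝ) *
      ((r + mt.1 + mt.2 : ℕ) : ℝ) ^ n / 2 ^ (j - 1 + mt.2)) with hF
  have hFnonneg : ∀ x, 0 ≤ F x := fun x => by
    rw [hF]; dsimp only; positivity
  have hFsum : Summable F := by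
    have hprod : Summable (fun x : ℕ × ℕ =>
        (((x.1 : ℝ) + 1) ^ n * (1 / 2 : ℝ) ^ x.1) *
        ((1 / 2 : ℝ) * (((j - 1 + x.2 - 1).choose x.2 : ℝ) *
          ((r + 1 + x.2 : ℕ) : ℝ) ^ n / 2 ^ (j - 1 + x.2)))) := by
      apply Summable.mul_of_nonneg (sum_poly_geo 1 n) ((p_summable (r + 1) (j - 1) n).mul_left _)
        (fun m => by positivity) (fun t => by positivity)
    apply Summable.of_nonneg_of_le hFnonneg _ hprod
    rintro ⟨m, t⟩
    rw [hF]; dsimp only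
    have hX : ((r + m + t : ℕ) : ℝ) ^ n ≤ ((r + 1 + t : ℕ) : ℝ) ^ n * ((m : ℝ) + 1) ^ n := by
      rw [← mul_pow]
      apply pow_le_pow_left₀ (by positivity)
      push_cast
      nlinarith [Nat.cast_nonneg (α := ℝ) r, Nat.cast_nonneg (α := ℝ) m,
        Nat.cast_nonneg (α := ℝ) t]
    have key : (1 / 2 : ℝ) ^ (m + 1) * (((j - 1 + t - 1).choose t : ℝ) *
        ((r + m + t : ℕ) : ℝ) ^ n / 2 ^ (j - 1 + t))
        ≤ (1 / 2 : ℝ) ^ (m + 1) * (((j - 1 + t - 1).choose t : ℝ) *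
        (((r + 1 + t : ℕ) : ℝ) ^ n * ((m : ℝ) + 1) ^ n) / 2 ^ (j - 1 + t)) := by
      apply mul_le_mul_of_nonneg_left _ (by positivity)
      apply div_le_div_of_nonneg_right ?_ (by positivity)
      exact mul_le_mul_of_nonneg_left hX (by positivity)
    refine key.trans (le_of_eq ?_)
    rw [pow_succ]
    ring
  have hu : ∀ u : ℕ, ∑ x ∈ Finset.HasAntidiagonal.antidiagonal u, F x
      = ((j + u - 1).choose u : ℝ) * ((r + u : ℕ) : ℝ) ^ n / 2 ^ (j + u) := by
    intro u
    rw [Finset.Nat.sum_antidiagonal_eq_sum_range_succ_mk]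
    have h1 : ∀ k ∈ range (u + 1), F (k, u - k)
        = ((j - 1 + (u - k) - 1).choose (u - k) : ℝ) * ((r + u : ℕ) : ℝ) ^ n / 2 ^ (j + u) := by
      intro k hk
      have hk' : k ≤ u := by simpa [Nat.lt_succ_iff] using hk
      rw [hF]; dsimp only
      have e1 : r + k + (u - k) = r + u := by omega
      have e2 : (k + 1) + (j - 1 + (u - k)) = j + u := by omega
      rw [e1]
      have e3 : (2 : ℝ) ^ (j + u) = 2 ^ (k + 1) * 2 ^ (j - 1 + (u - k)) := by
        rw [← pow_add, e2]
      rw [e3, div_pow, one_pow]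
      rw [div_mul_eq_mul_div, mul_div_assoc]
      rw [div_mul_eq_div_div_swap]
      ring
    rw [Finset.sum_congr rfl h1, ← Finset.sum_div, ← Finset.sum_mul]
    have h2 : ∑ k ∈ range (u + 1), ((j - 1 + (u - k) - 1).choose (u - k) : ℝ)
        = ((j + u - 1).choose u : ℝ) := by
      have hr := Finset.sum_range_reflect (fun k => ((j - 1 + k - 1).choose k : ℝ)) (u + 1)
      simp only [Nat.add_sub_cancel] at hr
      calc ∑ k ∈ range (u + 1), ((j - 1 + (u - k) - 1).choose (u - k) : ℝ)
          = ∑ k ∈ range (u + 1), ((j - 1 + k - 1).choose k : ℝ) := hr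
        _ = (((j - 1 + u).choose u : ℕ) : ℝ) := by rw [← Nat.cast_sum, hockey]
        _ = ((j + u - 1).choose u : ℝ) := by congr 2; omega
    rw [h2]
  have hmargsum : ∀ m : ℕ, Summable (fun t => F (m, t)) := by
    intro m
    have := (p_summable (r + m) (j - 1) n).mul_left ((1 / 2 : ℝ) ^ (m + 1))
    apply this.congr
    intro t
    rw [hF]
  have hsig : Summable (fun x : Σ u : ℕ, Finset.HasAntidiagonal.antidiagonal u => F x.2.val) :=
    (Finset.HasAntidiagonal.sigmaAntidiagonalEquivProd.summable_iff).2 hFsum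
  calc p r j n
      = ∑' u, ∑ x ∈ Finset.HasAntidiagonal.antidiagonal u, F x := by
        rw [p]; exact tsum_congr fun u => (hu u).symm
    _ = ∑' u, ∑' x : Finset.HasAntidiagonal.antidiagonal u, F x.val := by
        exact tsum_congr fun u => (Finset.tsum_subtype _ _).symm
    _ = ∑' x : Σ u : ℕ, Finset.HasAntidiagonal.antidiagonal u, F x.2.val := (Summable.tsum_sigma hsig).symm
    _ = ∑' mt : ℕ × ℕ, F mt := Finset.HasAntidiagonal.sigmaAntidiagonalEquivProd.tsum_eq F
    _ = ∑' m, ∑' t, F (m, t) := Summable.tsum_prod' hFsum hmargsum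
    _ = ∑' m : ℕ, (1 / 2 : ℝ) ^ (m + 1) * p (r + m) (j - 1) n := by
        apply tsum_congr
        intro m
        rw [show (fun t => F (m, t)) = fun t => (1 / 2 : ℝ) ^ (m + 1) *
          (((j - 1 + t - 1).choose t : ℝ) * ((r + m + t : ℕ) : ℝ) ^ n / 2 ^ (j - 1 + t)) from rfl,
          tsum_mul_left]
        rfl
lemma fwd_zero_iterate (e : ℕ) : (Δ_[1])^[e] (0 : ℕ → ℝ) = 0 := by
  apply Function.iterate_fixed
  funext m
  show (0 : ℕ → ℝ) (m + 1) - (0 : ℕ → ℝ) m = 0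
  simp

lemma fwd_pow (n : ℕ) (c : ℝ) : (Δ_[1])^[n + 1] (fun m : ℕ => ((m : ℝ) + c) ^ n) = 0 := by
  induction n using Nat.strong_induction_on with
  | _ n IH =>
  have hΔ : Δ_[1] (fun m : ℕ => ((m : ℝ) + c) ^ n)
      = fun m : ℕ => ∑ i ∈ range n, (n.choose i : ℝ) * ((m : ℝ) + c) ^ i := by
    funext m
    show (((m + 1 : ℕ) : ℝ) + c) ^ n - ((m : ℝ) + c) ^ n = _
    have hb : (((m + 1 : ℕ) : ℝ) + c) ^ n
        = ∑ i ∈ range (n + 1), ((m : ℝ) + c) ^ i * (1 : ℝ) ^ (n - i) * (n.choose i : ℝ) := by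
      push_cast
      rw [show (m : ℝ) + 1 + c = ((m : ℝ) + c) + 1 by ring, add_pow]
    rw [hb, Finset.sum_range_succ, Nat.choose_self, Nat.cast_one, mul_one, one_pow, mul_one,
      add_sub_cancel_right]
    exact Finset.sum_congr rfl fun i _ => by ring
  have hsplit : (fun m : ℕ => ∑ i ∈ range n, (n.choose i : ℝ) * ((m : ℝ) + c) ^ i)
      = ∑ i ∈ range n, (n.choose i : ℝ) • (fun m : ℕ => ((m : ℝ) + c) ^ i) := by
    funext m
    rw [Finset.sum_apply]
    exact Finset.sum_congr rfl fun i _ => rfl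
  rw [Function.iterate_succ_apply, hΔ, hsplit, fwdDiff_iter_finset_sum]
  apply Finset.sum_eq_zero
  intro i hi
  have hi' : i < n := mem_range.1 hi
  have hz : (Δ_[1])^[n] (fun m : ℕ => ((m : ℝ) + c) ^ i) = 0 := by
    conv_lhs => rw [show n = (n - (i + 1)) + (i + 1) by omega]
    rw [Function.iterate_add_apply, IH i hi', fwd_zero_iterate]
  rw [fwdDiff_iter_const_smul, hz, smul_zero]

lemma qdiff (r j n k M : ℕ) :
    (Δ_[1])^[k] (fun m : ℕ => p (r + m) (j - 1) n) M
      = ∑' t : ℕ, (Δ_[1])^[k] (fun m : ℕ => ((j - 1 + t - 1).choose t : ℝ) *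
          ((r + m + t : ℕ) : ℝ) ^ n / 2 ^ (j - 1 + t)) M := by
  rw [fwdDiff_iter_eq_sum_shift]
  have step : ∀ t : ℕ, (Δ_[1])^[k] (fun m : ℕ => ((j - 1 + t - 1).choose t : ℝ) *
      ((r + m + t : ℕ) : ℝ) ^ n / 2 ^ (j - 1 + t)) M
      = ∑ i ∈ range (k + 1), ((-1 : ℤ) ^ (k - i) * (k.choose i : ℤ)) •
          (((j - 1 + t - 1).choose t : ℝ) * ((r + (M + i • 1) + t : ℕ) : ℝ) ^ n / 2 ^ (j - 1 + t)) :=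
    fun t => fwdDiff_iter_eq_sum_shift 1 _ k M
  rw [tsum_congr step, Summable.tsum_finsetSum (fun i _ =>
    Summable.const_smul _ (p_summable (r + (M + i • 1)) (j - 1) n))]
  apply Finset.sum_congr rfl
  intro i _
  rw [Summable.tsum_const_smul _ (p_summable (r + (M + i • 1)) (j - 1) n)]
  congr 1

lemma qvanish (r j n : ℕ) : (Δ_[1])^[n + 1] (fun m : ℕ => p (r + m) (j - 1) n) = 0 := by
  funext M
  rw [qdiff]
  have : ∀ t : ℕ, (Δ_[1])^[n + 1] (fun m : ℕ => ((j - 1 + t - 1).choose t : ℝ) *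
      ((r + m + t : ℕ) : ℝ) ^ n / 2 ^ (j - 1 + t)) M = 0 := by
    intro t
    have hfun : (fun m : ℕ => ((j - 1 + t - 1).choose t : ℝ) *
        ((r + m + t : ℕ) : ℝ) ^ n / 2 ^ (j - 1 + t))
        = (((j - 1 + t - 1).choose t : ℝ) / 2 ^ (j - 1 + t)) •
          (fun m : ℕ => ((m : ℝ) + ((r + t : ℕ) : ℝ)) ^ n) := by
      funext m
      simp only [Pi.smul_apply, smul_eq_mul]
      rw [show ((m : ℝ) + ((r + t : ℕ) : ℝ)) = ((r + m + t : ℕ) : ℝ) by push_cast; ring]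
      ring
    rw [hfun, fwdDiff_iter_const_smul, fwd_pow, smul_zero]
    rfl
  rw [tsum_congr this, tsum_zero]
  rfl

set_option maxHeartbeats 1000000 in
theorem stmt3 (r j n : ℕ) (hj : 1 ≤ j) (hn : 1 ≤ n) :
    Summable (fun k : ℕ =>
      ∑ s ∈ Finset.range (k + 1), (k.choose s : ℝ) * (-1) ^ s * p (r + k - s) (j - 1) n) ∧
    p r j n = ∑' k : ℕ,
      ∑ s ∈ Finset.range (k + 1), (k.choose s : ℝ) * (-1) ^ s * p (r + k - s) (j - 1) n := by
  set q : ℕ → ℝ := fun m => p (r + m) (j - 1) n with hqdef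
  have key : ∀ k : ℕ, (∑ s ∈ Finset.range (k + 1),
      (k.choose s : ℝ) * (-1) ^ s * p (r + k - s) (j - 1) n) = (Δ_[1])^[k] q 0 := by
    intro k
    rw [fwdDiff_iter_eq_sum_shift]
    rw [← Finset.sum_range_reflect]
    apply Finset.sum_congr rfl
    intro i hi
    have hik : i ≤ k := by have := mem_range.1 hi; omega
    have e1 : k + 1 - 1 - i = k - i := by omega
    have e2 : r + k - (k - i) = r + i := by omega
    have e3 : k.choose (k - i) = k.choose i := Nat.choose_symm hik
    rw [e1, e2, e3]
    simp only [zsmul_eq_mul, smul_eq_mul, mul_one, zero_add, hqdef]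
    push_cast
    ring
  have hQ : (Δ_[1])^[n + 1] q = 0 := qvanish r j n
  have hvanM : ∀ M : ℕ, (Δ_[1])^[n + 1] q M = 0 := fun M => by rw [hQ]; rfl
  have hvan : ∀ k ∉ Finset.range (n + 1), (∑ s ∈ Finset.range (k + 1),
      (k.choose s : ℝ) * (-1) ^ s * p (r + k - s) (j - 1) n) = 0 := by
    intro k hk
    rw [key k]
    have hkn : n + 1 ≤ k := by simpa using hk
    obtain ⟨e, rfl⟩ : ∃ e, k = e + (n + 1) := ⟨k - (n + 1), by omega⟩
    rw [Function.iterate_add_apply, hQ, fwd_zero_iterate]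
    rfl
  have hsummable : Summable (fun k : ℕ => ∑ s ∈ Finset.range (k + 1),
      (k.choose s : ℝ) * (-1) ^ s * p (r + k - s) (j - 1) n) :=
    summable_of_ne_finset_zero hvan
  refine ⟨hsummable, ?_⟩
  rw [tsum_eq_sum hvan]
  have hqnonneg : ∀ m : ℕ, 0 ≤ q m := by
    intro m
    simp only [hqdef, p]
    exact tsum_nonneg fun t => by positivity
  have hrec : ∀ M : ℕ, ∑ k ∈ range (n + 1), (Δ_[1])^[k] q (M + 1)
      = 2 * (∑ k ∈ range (n + 1), (Δ_[1])^[k] q M) - q M := by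
    intro M
    have h2 : ∀ k : ℕ, (Δ_[1])^[k] q (M + 1) = (Δ_[1])^[k + 1] q M + (Δ_[1])^[k] q M := by
      intro k
      rw [Function.iterate_succ_apply']
      show (Δ_[1])^[k] q (M + 1)
        = ((Δ_[1])^[k] q (M + 1) - (Δ_[1])^[k] q M) + (Δ_[1])^[k] q M
      ring
    rw [Finset.sum_congr rfl (fun k _ => h2 k), Finset.sum_add_distrib]
    have h3 : ∑ k ∈ range (n + 1), (Δ_[1])^[k + 1] q M
        = (∑ k ∈ range (n + 1), (Δ_[1])^[k] q M) - q M := by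
      have h4 := Finset.sum_range_succ' (fun k => (Δ_[1])^[k] q M) (n + 1)
      have h5 := Finset.sum_range_succ (fun k => (Δ_[1])^[k] q M) (n + 1)
      have h6 : (Δ_[1])^[n + 1] q M = 0 := hvanM M
      have h7 : (Δ_[1])^[0] q M = q M := rfl
      linarith [h4, h5, h6, h7]
    rw [h3]
    ring
  have hpartial : ∀ M : ℕ, (∑ k ∈ range (n + 1), (Δ_[1])^[k] q 0)
      = (∑ m ∈ range M, (1 / 2 : ℝ) ^ (m + 1) * q m)
        + (1 / 2 : ℝ) ^ M * (∑ k ∈ range (n + 1), (Δ_[1])^[k] q M) := by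
    intro M
    induction M with
    | zero => simp
    | succ M ih =>
      rw [ih, hrec M, Finset.sum_range_succ (fun m => (1 / 2 : ℝ) ^ (m + 1) * q m) M]
      ring
  have hK : (0 : ℝ) ≤ p 1 (j - 1) n := by
    rw [p]; exact tsum_nonneg fun t => by positivity
  have hqbound : ∀ m : ℕ, q m ≤ ((m : ℝ) + r + 1) ^ n * p 1 (j - 1) n := by
    intro m
    have hs1 := p_summable (r + m) (j - 1) n
    have hs2 := (p_summable 1 (j - 1) n).mul_left (((m : ℝ) + r + 1) ^ n)
    have hle : ∀ t : ℕ, ((j - 1 + t - 1).choose t : ℝ) * ((r + m + t : ℕ) : ℝ) ^ n / 2 ^ (j - 1 + t)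
        ≤ ((m : ℝ) + r + 1) ^ n *
          (((j - 1 + t - 1).choose t : ℝ) * ((1 + t : ℕ) : ℝ) ^ n / 2 ^ (j - 1 + t)) := by
      intro t
      have hp : ((r + m + t : ℕ) : ℝ) ^ n ≤ (((m : ℝ) + r + 1) * ((1 + t : ℕ) : ℝ)) ^ n := by
        apply pow_le_pow_left₀ (by positivity)
        push_cast
        nlinarith [Nat.cast_nonneg (α := ℝ) r, Nat.cast_nonneg (α := ℝ) m,
          Nat.cast_nonneg (α := ℝ) t]
      calc ((j - 1 + t - 1).choose t : ℝ) * ((r + m + t : ℕ) : ℝ) ^ n / 2 ^ (j - 1 + t)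
          = ((j - 1 + t - 1).choose t : ℝ) / 2 ^ (j - 1 + t) * ((r + m + t : ℕ) : ℝ) ^ n := by
            ring
        _ ≤ ((j - 1 + t - 1).choose t : ℝ) / 2 ^ (j - 1 + t) *
            ((((m : ℝ) + r + 1) * ((1 + t : ℕ) : ℝ)) ^ n) := by
            exact mul_le_mul_of_nonneg_left hp (by positivity)
        _ = ((m : ℝ) + r + 1) ^ n *
            (((j - 1 + t - 1).choose t : ℝ) * ((1 + t : ℕ) : ℝ) ^ n / 2 ^ (j - 1 + t)) := by
            rw [mul_pow]; ring
    have hq1 : q m = ∑' t : ℕ, ((j - 1 + t - 1).choose t : ℝ) *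
        ((r + m + t : ℕ) : ℝ) ^ n / 2 ^ (j - 1 + t) := by
      simp only [hqdef, p]
    have hq2 : p 1 (j - 1) n = ∑' t : ℕ, ((j - 1 + t - 1).choose t : ℝ) *
        ((1 + t : ℕ) : ℝ) ^ n / 2 ^ (j - 1 + t) := by
      simp only [p]
    rw [hq1, hq2, ← tsum_mul_left]
    exact Summable.tsum_le_tsum hle hs1 hs2
  have hT : ∀ i : ℕ, Tendsto (fun M : ℕ => (1 / 2 : ℝ) ^ M * q (M + i)) atTop (nhds 0) := by
    intro i
    have hub : ∀ M : ℕ, (1 / 2 : ℝ) ^ M * q (M + i)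
        ≤ (((M : ℝ) + ((i : ℝ) + (r : ℝ) + 1)) ^ n * (1 / 2 : ℝ) ^ M) * p 1 (j - 1) n := by
      intro M
      have hb := hqbound (M + i)
      have hcast : ((M + i : ℕ) : ℝ) + r + 1 = (M : ℝ) + ((i : ℝ) + (r : ℝ) + 1) := by
        push_cast; ring
      calc (1 / 2 : ℝ) ^ M * q (M + i)
          ≤ (1 / 2 : ℝ) ^ M * ((((M + i : ℕ) : ℝ) + r + 1) ^ n * p 1 (j - 1) n) :=
            mul_le_mul_of_nonneg_left hb (by positivity)
        _ = (((M : ℝ) + ((i : ℝ) + (r : ℝ) + 1)) ^ n * (1 / 2 : ℝ) ^ M) * p 1 (j - 1) n := by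
            rw [hcast]; ring
    apply squeeze_zero (fun M => mul_nonneg (by positivity) (hqnonneg (M + i))) hub
    have := (poly_geo_tendsto ((i : ℝ) + (r : ℝ) + 1) n).mul_const (p 1 (j - 1) n)
    simpa using this
  have hqsum : Summable (fun m : ℕ => (1 / 2 : ℝ) ^ (m + 1) * q m) := by
    apply Summable.of_nonneg_of_le (fun m => mul_nonneg (by positivity) (hqnonneg m))
      (fun m => ?_) (((sum_poly_geo ((r : ℝ) + 1) n).mul_right (p 1 (j - 1) n)).mul_left (1 / 2))
    calc (1 / 2 : ℝ) ^ (m + 1) * q m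
        ≤ (1 / 2 : ℝ) ^ (m + 1) * (((m : ℝ) + r + 1) ^ n * p 1 (j - 1) n) :=
          mul_le_mul_of_nonneg_left (hqbound m) (by positivity)
      _ = (1 / 2 : ℝ) * ((((m : ℝ) + ((r : ℝ) + 1)) ^ n * (1 / 2 : ℝ) ^ m) * p 1 (j - 1) n) := by
          rw [show (m : ℝ) + (r : ℝ) + 1 = (m : ℝ) + ((r : ℝ) + 1) by ring, pow_succ]
          ring
  have hHlim : Tendsto (fun M : ℕ => (1 / 2 : ℝ) ^ M * ∑ k ∈ range (n + 1), (Δ_[1])^[k] q M)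
      atTop (nhds 0) := by
    have hrepr : ∀ M : ℕ, (1 / 2 : ℝ) ^ M * ∑ k ∈ range (n + 1), (Δ_[1])^[k] q M
        = ∑ k ∈ range (n + 1), ∑ i ∈ range (k + 1),
            (((-1 : ℤ) ^ (k - i) * (k.choose i : ℤ) : ℤ) : ℝ) * ((1 / 2 : ℝ) ^ M * q (M + i)) := by
      intro M
      rw [Finset.mul_sum]
      apply Finset.sum_congr rfl
      intro k _
      rw [fwdDiff_iter_eq_sum_shift, Finset.mul_sum]
      apply Finset.sum_congr rfl
      intro i _
      simp only [zsmul_eq_mul, smul_eq_mul, mul_one]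
      push_cast
      ring
    rw [show (fun M : ℕ => (1 / 2 : ℝ) ^ M * ∑ k ∈ range (n + 1), (Δ_[1])^[k] q M)
      = _ from funext hrepr]
    have := tendsto_finset_sum (range (n + 1)) (fun k (_ : k ∈ range (n + 1)) =>
      tendsto_finset_sum (range (k + 1)) (fun i (_ : i ∈ range (k + 1)) =>
        ((hT i).const_mul ((((-1 : ℤ) ^ (k - i) * (k.choose i : ℤ) : ℤ) : ℝ)))))
    simpa using this
  have hH0 : (∑ k ∈ range (n + 1), (Δ_[1])^[k] q 0)
      = ∑' m : ℕ, (1 / 2 : ℝ) ^ (m + 1) * q m := by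
    have h1 : Tendsto (fun M : ℕ => ∑ m ∈ range M, (1 / 2 : ℝ) ^ (m + 1) * q m) atTop
        (nhds (∑' m : ℕ, (1 / 2 : ℝ) ^ (m + 1) * q m)) := hqsum.hasSum.tendsto_sum_nat
    have h2 : Tendsto (fun M : ℕ => ∑ m ∈ range M, (1 / 2 : ℝ) ^ (m + 1) * q m) atTop
        (nhds (∑ k ∈ range (n + 1), (Δ_[1])^[k] q 0)) := by
      have heq : (fun M : ℕ => ∑ m ∈ range M, (1 / 2 : ℝ) ^ (m + 1) * q m)
          = fun M : ℕ => (∑ k ∈ range (n + 1), (Δ_[1])^[k] q 0)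
            - (1 / 2 : ℝ) ^ M * (∑ k ∈ range (n + 1), (Δ_[1])^[k] q M) := by
        funext M
        rw [hpartial M]
        ring
      rw [heq]
      simpa using tendsto_const_nhds.sub hHlim
    exact tendsto_nhds_unique h2 h1
  rw [show (∑ k ∈ Finset.range (n + 1), ∑ s ∈ Finset.range (k + 1),
      (k.choose s : ℝ) * (-1) ^ s * p (r + k - s) (j - 1) n)
      = ∑ k ∈ range (n + 1), (Δ_[1])^[k] q 0 from Finset.sum_congr rfl fun k _ => key k, hH0]
  simp only [hqdef]
  exact pA r j n hj
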